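/- Let K be a field with char(K) = 0 or char(K) > n, let 1 ≤ d ≤ n, and N ≥ n+d. Then in K[x_1,...,x_N], the ideal generated by the S_N-orbit of e_d(x_1,...,x_n) equals the ideal generated by the S_N-orbit of the monomial x_1 x_2 ··· x_d. -/

import Mathlib

open MvPolynomial

/-- The elementary symmetric polynomial of degree `d` in the variables indexed by `S`. -/
noncomputable def esymmOn (K : Type*) [Field K] {N : ℕ} (S : Finset (Fin N)) (d : ℕ) :
    MvPolynomial (Fin N) K :=
  ∑ T ∈ Finset.powersetCard d S, ∏ i ∈ T, X i

/-- The ideal generated by the `S_N`-orbit of `f`. -/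
noncomputable def symOrbitIdeal {K : Type*} [Field K] {N : ℕ} (f : MvPolynomial (Fin N) K) :
    Ideal (MvPolynomial (Fin N) K) :=
  Ideal.span {g | ∃ σ : Equiv.Perm (Fin N), g = rename σ f}

section Aux
variable {K : Type*} [Field K] {N : ℕ}

lemma cardAux {α : Type*} [Fintype α] [DecidableEq α] {S T : Finset α} (h : S.card = T.card) :
    Fintype.card {x // x ∈ S} = Fintype.card {x // x ∈ T} := by simpa using h

lemma cardAux' {α : Type*} [Fintype α] [DecidableEq α] {S T : Finset α} (h : S.card = T.card) :
    Fintype.card {x // ¬ x ∈ S} = Fintype.card {x // ¬ x ∈ T} := by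
  rw [Fintype.card_subtype_compl, Fintype.card_subtype_compl]
  simp only [Fintype.card_coe] at *
  omega

noncomputable def permOfFinsets {α : Type*} [Fintype α] [DecidableEq α]
    (S T : Finset α) (h : S.card = T.card) : Equiv.Perm α :=
  Equiv.subtypeCongr (Fintype.equivOfCardEq (cardAux h)) (Fintype.equivOfCardEq (cardAux' h))

lemma permOfFinsets_image {α : Type*} [Fintype α] [DecidableEq α]
    (S T : Finset α) (h : S.card = T.card) :
    S.image (permOfFinsets S T h) = T := by
  apply Finset.eq_of_subset_of_card_le
  · intro x hx
    simp only [Finset.mem_image] at hx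
    obtain ⟨a, ha, rfl⟩ := hx
    have : permOfFinsets S T h a = (Fintype.equivOfCardEq (cardAux h) ⟨a, ha⟩ : {x // x ∈ T}) := by
      simp [permOfFinsets, Equiv.subtypeCongr, ha]
    rw [this]
    exact (Fintype.equivOfCardEq (cardAux h) ⟨a, ha⟩).2
  · rw [Finset.card_image_of_injective _ (Equiv.injective _), h]

lemma rename_prodX (σ : Equiv.Perm (Fin N)) (A : Finset (Fin N)) :
    rename σ (∏ i ∈ A, (X i : MvPolynomial (Fin N) K)) = ∏ i ∈ A.image σ, X i := by
  rw [map_prod, Finset.prod_image (fun a _ b _ h => σ.injective h)]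
  simp

lemma rename_esymmOn (σ : Equiv.Perm (Fin N)) (S : Finset (Fin N)) (d : ℕ) :
    rename σ (esymmOn K S d) = esymmOn K (S.image σ) d := by
  rw [esymmOn, map_sum, esymmOn,
    show Finset.image (⇑σ) S = S.map σ.toEmbedding by ext x; simp only [Finset.mem_image, Finset.mem_map, Equiv.coe_toEmbedding],
    Finset.powersetCard_map, Finset.sum_map]
  refine Finset.sum_congr rfl fun T _ => ?_
  show _ = ∏ i ∈ (Finset.mapEmbedding σ.toEmbedding) T, X i
  rw [Finset.mapEmbedding_apply, Finset.prod_map, map_prod]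
  simp

lemma esymmOn_zero (S : Finset (Fin N)) : esymmOn K S 0 = 1 := by
  simp [esymmOn, Finset.powersetCard_zero]

lemma esymmOn_insert {a : Fin N} {S : Finset (Fin N)} (ha : a ∉ S) (e : ℕ) :
    esymmOn K (insert a S) (e + 1) = esymmOn K S (e + 1) + X a * esymmOn K S e := by
  rw [esymmOn, Finset.powersetCard_succ_insert ha, Finset.sum_union, esymmOn, esymmOn,
    Finset.sum_image, Finset.mul_sum]
  · congr 1
    refine Finset.sum_congr rfl fun T hT => ?_
    rw [Finset.mem_powersetCard] at hT
    rw [Finset.prod_insert (fun h => ha (hT.1 h))]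
  · intro T hT U hU h
    rw [Finset.mem_coe, Finset.mem_powersetCard] at hT hU
    have := fun {T : Finset (Fin N)} (hT : T ⊆ S) => Finset.erase_insert (fun h => ha (hT h))
    rw [← this hT.1, ← this hU.1, h]
  · rw [Finset.disjoint_left]
    intro T hT hT'
    rw [Finset.mem_powersetCard] at hT
    simp only [Finset.mem_image] at hT'
    obtain ⟨U, hU, rfl⟩ := hT'
    rw [Finset.mem_powersetCard] at hU
    exact ha (hT.1 (Finset.mem_insert_self a U))

lemma esymmOn_sum_erase (S : Finset (Fin N)) (e : ℕ) :
    ∑ u ∈ S, esymmOn K (S.erase u) e = (S.card - e) • esymmOn K S e := by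
  have h1 : ∀ u, Finset.powersetCard e (S.erase u)
      = (Finset.powersetCard e S).filter (fun T => u ∉ T) := by
    intro u
    ext T
    simp only [Finset.mem_powersetCard, Finset.mem_filter, Finset.subset_erase]
    tauto
  simp only [esymmOn, h1, Finset.sum_filter]
  rw [Finset.sum_comm]
  rw [Finset.smul_sum]
  refine Finset.sum_congr rfl fun T hT => ?_
  rw [Finset.mem_powersetCard] at hT
  rw [← Finset.sum_filter, Finset.sum_const]
  congr 1
  rw [show S.filter (fun u => u ∉ T) = S \ T by ext x; simp [Finset.mem_sdiff]]
  rw [Finset.card_sdiff_of_subset hT.1, hT.2]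

lemma cast_ne_zero_of_char {n : ℕ} (hchar : ringChar K = 0 ∨ n < ringChar K)
    {m : ℕ} (h1 : 1 ≤ m) (h2 : m ≤ n) : (m : K) ≠ 0 := by
  rcases hchar with h | h
  · have : CharZero K := by
      have := ringChar.charP K
      rw [h] at this
      exact CharP.charP_to_charZero K
    exact Nat.cast_ne_zero.mpr (by omega)
  · intro hm
    have := (CharP.cast_eq_zero_iff K (ringChar K) m).mp (by rw [ringChar.spec] at hm ⊢; exact hm)
    have := Nat.le_of_dvd (by omega) this
    omega

lemma card_filter_lt (m : ℕ) (hm : m ≤ N) :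
    (Finset.univ.filter (fun i : Fin N => (i : ℕ) < m)).card = m := by
  rw [← Finset.card_range m]
  apply Finset.card_bij (fun (i : Fin N) _ => (i : ℕ))
  · intro a ha; simp only [Finset.mem_filter] at ha; simpa using ha.2
  · intro a ha b hb h; exact Fin.ext h
  · intro b hb
    simp only [Finset.mem_range] at hb
    exact ⟨⟨b, by omega⟩, by simp [hb], rfl⟩

end Aux

section Main
variable {K : Type*} [Field K] {n d N : ℕ}

-- any esymmOn of a size-n set is in the orbit ideal
lemma esymmOn_mem_orbit (hnN : n ≤ N) {S : Finset (Fin N)} (hS : S.card = n) :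
    esymmOn K S d ∈
      symOrbitIdeal (esymmOn K (Finset.univ.filter (fun i : Fin N => (i : ℕ) < n)) d) := by
  set Sn := Finset.univ.filter (fun i : Fin N => (i : ℕ) < n) with hSn
  have hc : Sn.card = S.card := by rw [card_filter_lt n hnN, hS]
  have := permOfFinsets_image Sn S hc
  refine Ideal.subset_span ⟨permOfFinsets Sn S hc, ?_⟩
  rw [rename_esymmOn, this]

-- size bump: esymmOn of sets of size between n and n+d
lemma esymmOn_mem_orbit_big (hd : 1 ≤ d) (hdn : d ≤ n) (hnN : n ≤ N)
    (hchar : ringChar K = 0 ∨ n < ringChar K) :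
    ∀ m : ℕ, m ≤ d → ∀ S : Finset (Fin N), S.card = n + m →
    esymmOn K S d ∈
      symOrbitIdeal (esymmOn K (Finset.univ.filter (fun i : Fin N => (i : ℕ) < n)) d) := by
  intro m
  induction m with
  | zero => intro _ S hS; exact esymmOn_mem_orbit hnN (by simpa using hS)
  | succ m ih =>
    intro hm S hS
    set I := symOrbitIdeal (esymmOn K (Finset.univ.filter (fun i : Fin N => (i : ℕ) < n)) d)
    have hsum : ∑ u ∈ S, esymmOn K (S.erase u) d = (S.card - d) • esymmOn K S d :=
      esymmOn_sum_erase S d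
    have hmem : ∑ u ∈ S, esymmOn K (S.erase u) d ∈ I := by
      refine Ideal.sum_mem _ fun u hu => ?_
      exact ih (by omega) _ (by rw [Finset.card_erase_of_mem hu, hS]; omega)
    rw [hsum] at hmem
    set c : ℕ := S.card - d with hc
    have hc1 : 1 ≤ c := by omega
    have hc2 : c ≤ n := by omega
    have hcK : (c : K) ≠ 0 := cast_ne_zero_of_char hchar hc1 hc2
    have key : (C (c : K)) * esymmOn K S d ∈ I := by
      have : (C (c : K)) * esymmOn K S d = c • esymmOn K S d := by
        rw [nsmul_eq_mul]
        congr 1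
      rwa [this]
    have : esymmOn K S d = (C ((c : K)⁻¹)) * ((C (c : K)) * esymmOn K S d) := by
      rw [← mul_assoc, ← C_mul, inv_mul_cancel₀ hcK, C_1, one_mul]
    rw [this]
    exact Ideal.mul_mem_left _ _ key

lemma prod_mul_esymmOn_mem (hd : 1 ≤ d) (hdn : d ≤ n) (hN : n + d ≤ N)
    (hchar : ringChar K = 0 ∨ n < ringChar K) :
    ∀ k, k ≤ d → ∀ A S : Finset (Fin N), Disjoint A S → A.card = k →
      n ≤ S.card → S.card ≤ n + (d - k) →
      (∏ a ∈ A, (X a : MvPolynomial (Fin N) K)) * esymmOn K S (d - k) ∈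
        symOrbitIdeal (esymmOn K (Finset.univ.filter (fun i : Fin N => (i : ℕ) < n)) d) := by
  intro k
  induction k with
  | zero =>
    intro _ A S _ hA hn1 hn2
    rw [Finset.card_eq_zero] at hA
    subst hA
    rw [Finset.prod_empty, one_mul, Nat.sub_zero]
    exact esymmOn_mem_orbit_big hd hdn (by omega) hchar (S.card - n) (by omega) S (by omega)
  | succ k ih =>
    intro hk A S hAS hA hn1 hn2
    set I := symOrbitIdeal (esymmOn K (Finset.univ.filter (fun i : Fin N => (i : ℕ) < n)) d)
      with hI
    have haA : ∃ a, a ∈ A := Finset.card_pos.mp (by omega) |>.imp fun a h => h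
    obtain ⟨a, haA⟩ := haA
    set A' := A.erase a with hA'
    have hA'c : A'.card = k := by rw [hA', Finset.card_erase_of_mem haA, hA]; omega
    have haS : a ∉ S := Finset.disjoint_left.mp hAS haA
    have hA'S : Disjoint A' S := Finset.disjoint_of_subset_left (Finset.erase_subset _ _) hAS
    set e := d - (k + 1) with he
    have hde : d - k = e + 1 := by omega
    have hprod : ∏ i ∈ A, (X i : MvPolynomial (Fin N) K) = X a * ∏ i ∈ A', X i :=
      (Finset.mul_prod_erase A _ haA).symm
    have hkey : (∏ i ∈ A, (X i : MvPolynomial (Fin N) K)) * esymmOn K S e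
        = (∏ i ∈ A', (X i : MvPolynomial (Fin N) K)) * esymmOn K (insert a S) (e + 1)
          - (∏ i ∈ A', (X i : MvPolynomial (Fin N) K)) * esymmOn K S (e + 1) := by
      rw [hprod, esymmOn_insert haS e]
      ring
    have h1 : (∏ i ∈ A', (X i : MvPolynomial (Fin N) K)) * esymmOn K (insert a S) (e + 1) ∈ I := by
      have h1' := ih (by omega) A' (insert a S)
        (by rw [Finset.disjoint_insert_right]; exact ⟨Finset.notMem_erase a A, hA'S⟩)
        hA'c
        (by rw [Finset.card_insert_of_notMem haS]; omega)
        (by rw [Finset.card_insert_of_notMem haS]; omega)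
      rwa [hde] at h1'
    have h2 : (∏ i ∈ A', (X i : MvPolynomial (Fin N) K)) * esymmOn K S (e + 1) ∈ I := by
      have h2' := ih (by omega) A' S hA'S hA'c hn1 (by omega)
      rwa [hde] at h2'
    rw [hkey]
    exact Ideal.sub_mem _ h1 h2

end Main

/-- If `char K = 0` or `char K > n`, `1 ≤ d ≤ n` and `N ≥ n + d`, then the ideal generated
by the `S_N`-orbit of `e_d(x_1, …, x_n)` equals the ideal generated by the `S_N`-orbit of
the monomial `x_1 x_2 ⋯ x_d`. -/
theorem orbit_ideal_esymm_eq_orbit_ideal_monomial (K : Type*) [Field K] (n d N : ℕ)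
    (hd : 1 ≤ d) (hdn : d ≤ n) (hN : n + d ≤ N)
    (hchar : ringChar K = 0 ∨ n < ringChar K) :
    symOrbitIdeal (esymmOn K (Finset.univ.filter (fun i : Fin N => (i : ℕ) < n)) d)
      = symOrbitIdeal (∏ i ∈ Finset.univ.filter (fun i : Fin N => (i : ℕ) < d), X i) := by
  set Sn := Finset.univ.filter (fun i : Fin N => (i : ℕ) < n) with hSn
  set Sd := Finset.univ.filter (fun i : Fin N => (i : ℕ) < d) with hSd
  have hSdc : Sd.card = d := card_filter_lt d (by omega)
  apply le_antisymm
  · rw [symOrbitIdeal, Ideal.span_le]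
    rintro g ⟨σ, rfl⟩
    rw [rename_esymmOn, esymmOn]
    refine Ideal.sum_mem _ fun T hT => ?_
    rw [Finset.mem_powersetCard] at hT
    have hc : Sd.card = T.card := by rw [hSdc, hT.2]
    refine Ideal.subset_span ⟨permOfFinsets Sd T hc, ?_⟩
    rw [rename_prodX, permOfFinsets_image]
  · rw [symOrbitIdeal, Ideal.span_le]
    rintro g ⟨σ, rfl⟩
    rw [rename_prodX]
    set A := Sd.image σ with hA
    have hAc : A.card = d := by
      rw [hA, Finset.card_image_of_injective _ σ.injective, hSdc]
    have hcompl : n ≤ Aᶜ.card := by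
      rw [Finset.card_compl, hAc]
      simp only [Fintype.card_fin]
      omega
    obtain ⟨S, hSsub, hScard⟩ := Finset.exists_subset_card_eq hcompl
    have hdisj : Disjoint A S := by
      rw [Finset.disjoint_left]
      intro x hx hx'
      have := hSsub hx'
      simp only [Finset.mem_compl] at this
      exact this hx
    have := prod_mul_esymmOn_mem hd hdn hN hchar d le_rfl A S hdisj hAc
      (by omega) (by omega)
    rwa [Nat.sub_self, esymmOn_zero, mul_one] at this
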